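/- For any x ∈ ℝⁿ, sparsity level s, and radius r > 0, a solution to argmin_w ‖x − w‖₂ subject to ‖w‖₂ ≤ r and ‖w‖₀ ≤ s is given by w* = x_s if ‖x_s‖₂ ≤ r, and w* = (r/‖x_s‖₂)·x_s otherwise, where x_s is the best s-term approximation of x. -/

import Mathlib

/-- Restriction of `x` to the index set `S` (zero outside `S`). -/
noncomputable def restr {n : ℕ} (x : EuclideanSpace ℝ (Fin n)) (S : Finset (Fin n)) :
    EuclideanSpace ℝ (Fin n) := WithLp.toLp 2 (fun i => if i ∈ S then x i else 0)

lemma sparse_sum_le {n : ℕ} (x : Fin n → ℝ) (S T : Finset (Fin n))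
    (hcard : T.card ≤ S.card)
    (hSmax : ∀ i ∈ S, ∀ j ∉ S, |x j| ≤ |x i|) :
    ∑ i ∈ T, x i ^ 2 ≤ ∑ i ∈ S, x i ^ 2 := by
  have hTS : (T \ S).card ≤ (S \ T).card := by
    have h1 := Finset.card_sdiff_add_card_inter T S
    have h2 := Finset.card_sdiff_add_card_inter S T
    rw [Finset.inter_comm] at h2
    omega
  have hdiff : ∑ i ∈ T \ S, x i ^ 2 ≤ ∑ i ∈ S \ T, x i ^ 2 := by
    rcases Finset.eq_empty_or_nonempty (S \ T) with h | h
    · have h0 : (T \ S).card = 0 := by rw [h] at hTS; simpa using hTS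
      have he : T \ S = ∅ := Finset.card_eq_zero.mp h0
      simp [he, h]
    · set m := (S \ T).inf' h (fun j => x j ^ 2) with hm
      have hm0 : 0 ≤ m := Finset.le_inf' h _ (fun j _ => sq_nonneg _)
      calc ∑ i ∈ T \ S, x i ^ 2 ≤ (T \ S).card • m := by
            apply Finset.sum_le_card_nsmul
            intro i hi
            apply Finset.le_inf'
            intro j hj
            have hiS : i ∉ S := (Finset.mem_sdiff.mp hi).2
            have hjS : j ∈ S := (Finset.mem_sdiff.mp hj).1
            have habs := hSmax j hjS i hiS
            calc x i ^ 2 = |x i| ^ 2 := (sq_abs _).symm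
              _ ≤ |x j| ^ 2 := by nlinarith [abs_nonneg (x i)]
              _ = x j ^ 2 := sq_abs _
        _ ≤ (S \ T).card • m := nsmul_le_nsmul_left hm0 hTS
        _ ≤ ∑ i ∈ S \ T, x i ^ 2 :=
            Finset.card_nsmul_le_sum _ _ _ (fun j hj => Finset.inf'_le _ hj)
  have e1 : ∑ i ∈ T, x i ^ 2 = ∑ i ∈ T ∩ S, x i ^ 2 + ∑ i ∈ T \ S, x i ^ 2 :=
    (Finset.sum_inter_add_sum_sdiff T S _).symm
  have e2 : ∑ i ∈ S, x i ^ 2 = ∑ i ∈ S ∩ T, x i ^ 2 + ∑ i ∈ S \ T, x i ^ 2 :=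
    (Finset.sum_inter_add_sum_sdiff S T _).symm
  rw [Finset.inter_comm] at e2
  linarith

lemma norm_sq_eq' {n : ℕ} (y : EuclideanSpace ℝ (Fin n)) :
    ‖y‖ ^ 2 = ∑ i, (y i) ^ 2 := by
  rw [EuclideanSpace.norm_eq, Real.sq_sqrt (by positivity)]
  simp [sq_abs]


lemma restr_norm_sq {n : ℕ} (x : EuclideanSpace ℝ (Fin n)) (S : Finset (Fin n)) :
    ‖restr x S‖ ^ 2 = ∑ i ∈ S, x i ^ 2 := by
  rw [norm_sq_eq']
  rw [← Finset.sum_filter_add_sum_filter_not Finset.univ (fun i => i ∈ S)]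
  have h1 : Finset.univ.filter (fun i => i ∈ S) = S := by
    ext i; simp
  rw [h1]
  have h2 : ∀ i ∈ S, (restr x S i) ^ 2 = x i ^ 2 := by
    intro i hi; simp [restr, hi]
  rw [Finset.sum_congr rfl h2]
  have h3 : ∀ i ∈ Finset.univ.filter (fun i => ¬ i ∈ S), (restr x S i) ^ 2 = 0 := by
    intro i hi; simp at hi; simp [restr, hi]
  rw [Finset.sum_congr rfl h3]
  simp

/-- Bounded Sparse Projection: if `x_s = x|_S` is the best `s`-term approximation of `x`
(`S` a set of `s` largest-magnitude entries of `x`), then `w* = x_s` if `‖x_s‖ ≤ r` and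
`w* = (r/‖x_s‖) • x_s` otherwise solves `min ‖x − w‖₂` s.t. `‖w‖₂ ≤ r`, `‖w‖₀ ≤ s`. -/
theorem stmt_3 {n : ℕ} (x : EuclideanSpace ℝ (Fin n)) (s : ℕ) (hs : s ≤ n) (r : ℝ)
    (hr : 0 < r) (S : Finset (Fin n)) (hScard : S.card = s)
    (hSmax : ∀ i ∈ S, ∀ j ∉ S, |x j| ≤ |x i|)
    (xs wstar : EuclideanSpace ℝ (Fin n)) (hxs : xs = restr x S)
    (hwstar : wstar = if ‖xs‖ ≤ r then xs else (r / ‖xs‖) • xs) :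
    ‖wstar‖ ≤ r ∧ (Finset.univ.filter fun i => wstar i ≠ 0).card ≤ s ∧
      ∀ w : EuclideanSpace ℝ (Fin n),
        ‖w‖ ≤ r → (Finset.univ.filter fun i => w i ≠ 0).card ≤ s →
          ‖x - wstar‖ ≤ ‖x - w‖ := by
  subst hxs
  set t := ‖restr x S‖ with htdef
  have ht0 : 0 ≤ t := norm_nonneg _
  have htsq : t ^ 2 = ∑ i ∈ S, x i ^ 2 := restr_norm_sq x S
  -- (1) norm bound
  have hnorm : ‖wstar‖ ≤ r := by
    rw [hwstar]
    split_ifs with h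
    · exact h
    · push_neg at h
      have ht : 0 < t := lt_trans hr h
      rw [norm_smul, Real.norm_eq_abs, abs_of_pos (by positivity)]
      rw [← htdef, div_mul_cancel₀ _ (ne_of_gt ht)]
  -- (2) sparsity
  have hsupp : ∀ i, wstar i ≠ 0 → i ∈ S := by
    intro i hi
    by_contra hiS
    apply hi
    rw [hwstar]
    split_ifs <;> simp [restr, hiS]
  have hcard : (Finset.univ.filter fun i => wstar i ≠ 0).card ≤ s := by
    rw [← hScard]
    apply Finset.card_le_card
    intro i hi
    simp at hi
    exact hsupp i hi
  refine ⟨hnorm, hcard, ?_⟩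
  -- (3) optimality
  intro w hw hwc
  set T := Finset.univ.filter (fun i => w i ≠ 0) with hT
  have hwT : ∀ i, i ∉ T → w i = 0 := by
    intro i hi; simpa [hT] using hi
  set A := ∑ i, x i ^ 2 with hA
  set sT := ∑ i ∈ T, x i ^ 2 with hsT
  set sS := ∑ i ∈ S, x i ^ 2 with hsS
  have hsTS : sT ≤ sS := sparse_sum_le x S T (by rw [hScard]; exact hwc) hSmax
  set tT := ‖restr x T‖ with htT
  have htT0 : 0 ≤ tT := norm_nonneg _
  have htTsq : tT ^ 2 = sT := restr_norm_sq x T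
  have htTle : tT ≤ t := by nlinarith
  -- decomposition of ‖x - w‖²
  have hdec : ‖x - w‖ ^ 2 = ∑ i ∈ T, (x i - w i) ^ 2 + (A - sT) := by
    rw [norm_sq_eq']
    have e : ∀ i, (x - w) i = x i - w i := fun i => rfl
    simp_rw [e]
    rw [← Finset.sum_filter_add_sum_filter_not Finset.univ (fun i => i ∈ T)]
    have h1 : Finset.univ.filter (fun i => i ∈ T) = T := by ext i; simp
    rw [h1]
    have h2 : ∑ i ∈ Finset.univ.filter (fun i => ¬ i ∈ T), (x i - w i) ^ 2
        = ∑ i ∈ Finset.univ.filter (fun i => ¬ i ∈ T), x i ^ 2 := by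
      apply Finset.sum_congr rfl
      intro i hi
      simp at hi
      rw [hwT i hi, sub_zero]
    rw [h2]
    have h3 : ∑ i ∈ Finset.univ.filter (fun i => ¬ i ∈ T), x i ^ 2 = A - sT := by
      have := Finset.sum_filter_add_sum_filter_not Finset.univ (fun i => i ∈ T) (fun i => x i ^ 2)
      rw [h1] at this
      linarith
    rw [h3]
  -- lower bound on the T part
  have hu : ‖restr x T - w‖ ^ 2 = ∑ i ∈ T, (x i - w i) ^ 2 := by
    rw [norm_sq_eq']
    have e : ∀ i, (restr x T - w) i = restr x T i - w i := fun i => rfl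
    simp_rw [e]
    rw [← Finset.sum_filter_add_sum_filter_not Finset.univ (fun i => i ∈ T)]
    have h1 : Finset.univ.filter (fun i => i ∈ T) = T := by ext i; simp
    rw [h1]
    have h2 : ∀ i ∈ T, (restr x T i - w i) ^ 2 = (x i - w i) ^ 2 := by
      intro i hi; simp [restr, hi]
    rw [Finset.sum_congr rfl h2]
    have h3 : ∀ i ∈ Finset.univ.filter (fun i => ¬ i ∈ T), (restr x T i - w i) ^ 2 = 0 := by
      intro i hi
      simp at hi
      simp [restr, hi, hwT i hi]
    rw [Finset.sum_congr rfl h3]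
    simp
  have hu1 : tT - r ≤ ‖restr x T - w‖ := by
    have := norm_sub_norm_le (restr x T) w
    rw [← htT] at this
    linarith
  have hu0 : 0 ≤ ‖restr x T - w‖ := norm_nonneg _
  -- conclude
  have key : ‖x - wstar‖ ^ 2 ≤ ‖x - w‖ ^ 2 := by
    rw [hdec, hwstar]
    split_ifs with h
    · -- wstar = restr x S
      have hst : ‖x - restr x S‖ ^ 2 = A - sS := by
        rw [norm_sq_eq']
        have e : ∀ i, (x - restr x S) i = x i - restr x S i := fun i => rfl
        simp_rw [e]
        rw [← Finset.sum_filter_add_sum_filter_not Finset.univ (fun i => i ∈ S)]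
        have h1 : Finset.univ.filter (fun i => i ∈ S) = S := by ext i; simp
        rw [h1]
        have h2 : ∀ i ∈ S, (x i - restr x S i) ^ 2 = 0 := by
          intro i hi; simp [restr, hi]
        rw [Finset.sum_congr rfl h2]
        have h3 : ∀ i ∈ Finset.univ.filter (fun i => ¬ i ∈ S), (x i - restr x S i) ^ 2 = x i ^ 2 := by
          intro i hi; simp at hi; simp [restr, hi]
        rw [Finset.sum_congr rfl h3]
        have h4 : ∑ i ∈ Finset.univ.filter (fun i => ¬ i ∈ S), x i ^ 2 = A - sS := by
          have := Finset.sum_filter_add_sum_filter_not Finset.univ (fun i => i ∈ S) (fun i => x i ^ 2)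
          rw [h1] at this
          linarith
        rw [h4]
        simp
      rw [hst]
      have hpos : 0 ≤ ∑ i ∈ T, (x i - w i) ^ 2 := Finset.sum_nonneg fun i _ => sq_nonneg _
      linarith
    · -- wstar = (r/t) • restr x S
      push_neg at h
      have ht : 0 < t := lt_trans hr h
      have hst : ‖x - (r / t) • restr x S‖ ^ 2 = A - sS + (t - r) ^ 2 := by
        rw [norm_sq_eq']
        have e : ∀ i, (x - (r / t) • restr x S) i = x i - (r / t) * restr x S i := fun i => rfl
        simp_rw [e]
        rw [← Finset.sum_filter_add_sum_filter_not Finset.univ (fun i => i ∈ S)]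
        have h1 : Finset.univ.filter (fun i => i ∈ S) = S := by ext i; simp
        rw [h1]
        have h2 : ∀ i ∈ S, (x i - (r / t) * restr x S i) ^ 2 = (1 - r / t) ^ 2 * x i ^ 2 := by
          intro i hi; simp [restr, hi]; ring
        rw [Finset.sum_congr rfl h2]
        have h3 : ∀ i ∈ Finset.univ.filter (fun i => ¬ i ∈ S),
            (x i - (r / t) * restr x S i) ^ 2 = x i ^ 2 := by
          intro i hi; simp at hi; simp [restr, hi]
        rw [Finset.sum_congr rfl h3]
        have h4 : ∑ i ∈ Finset.univ.filter (fun i => ¬ i ∈ S), x i ^ 2 = A - sS := by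
          have := Finset.sum_filter_add_sum_filter_not Finset.univ (fun i => i ∈ S) (fun i => x i ^ 2)
          rw [h1] at this
          linarith
        rw [← Finset.mul_sum, ← hsS, h4]
        have : (1 - r / t) ^ 2 * sS = (t - r) ^ 2 := by
          rw [← htsq]
          field_simp
        rw [this]
        ring
      rw [hst]
      -- need: A - sS + (t - r)^2 ≤ Σ_T (x-w)^2 + (A - sT)
      have hgoal : sT - sS + (t - r) ^ 2 ≤ ∑ i ∈ T, (x i - w i) ^ 2 := by
        rw [← hu, ← htTsq, ← htsq]
        rcases le_or_gt r tT with hc | hc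
        · nlinarith [hu1, hu0]
        · nlinarith [hu0, sq_nonneg (‖restr x T - w‖)]
      linarith
  have := Real.sqrt_le_sqrt key
  rwa [Real.sqrt_sq (norm_nonneg _), Real.sqrt_sq (norm_nonneg _)] at this
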